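/- Restrict to one-dimensional shifts: define Δℓ_k(t) = Δℓ(t·e_k). If 0 < N_k < N, where N_k = #{n : y_n = k}, then Δℓ_k(t) → −∞ as t → +∞ and as t → −∞. Consequently, for any α ∈ (0,1], the set F_k(α) = {t ∈ ℝ : Δℓ_k(t) ≥ log α} is a nonempty compact interval containing 0. -/

import Mathlib

noncomputable def softmax {K : ℕ} (v : Fin K → ℝ) (j : Fin K) : ℝ :=
  Real.exp (v j) / ∑ l, Real.exp (v l)

noncomputable def deltaEll {N K : ℕ} (z : Fin N → Fin K → ℝ) (y : Fin N → Fin K)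
    (c : Fin K → ℝ) : ℝ :=
  ∑ n, (Real.log (softmax (fun l => z n l + c l) (y n)) -
        Real.log (softmax (z n) (y n)))

noncomputable def deltaEllK {N K : ℕ} (z : Fin N → Fin K → ℝ) (y : Fin N → Fin K)
    (k : Fin K) (t : ℝ) : ℝ :=
  deltaEll z y (fun l => if l = k then t else 0)

lemma convex_logCD (C D : ℝ) (hC : 0 < C) (hD : 0 < D) :
    ConvexOn ℝ Set.univ (fun t => Real.log (C + D * Real.exp t)) := by
  have hu : ∀ t : ℝ, 0 < C + D * Real.exp t := fun t => by positivity
  have hderiv : ∀ t : ℝ, HasDerivAt (fun t => Real.log (C + D * Real.exp t))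
      (D * Real.exp t / (C + D * Real.exp t)) t := by
    intro t
    have h1 : HasDerivAt (fun t : ℝ => C + D * Real.exp t) (D * Real.exp t) t :=
      ((Real.hasDerivAt_exp t).const_mul D).const_add C
    exact h1.log (hu t).ne'
  have hd1 : deriv (fun t => Real.log (C + D * Real.exp t)) =
      fun t => D * Real.exp t / (C + D * Real.exp t) :=
    funext fun t => (hderiv t).deriv
  have hderiv2 : ∀ t : ℝ, HasDerivAt (fun t => D * Real.exp t / (C + D * Real.exp t))
      (C * (D * Real.exp t) / (C + D * Real.exp t) ^ 2) t := by
    intro t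
    have h1 : HasDerivAt (fun t : ℝ => C + D * Real.exp t) (D * Real.exp t) t :=
      ((Real.hasDerivAt_exp t).const_mul D).const_add C
    have h2 : HasDerivAt (fun t : ℝ => D * Real.exp t) (D * Real.exp t) t :=
      (Real.hasDerivAt_exp t).const_mul D
    have := h2.div h1 (hu t).ne'
    refine this.congr_deriv ?_
    ring
  apply convexOn_univ_of_deriv2_nonneg
  · exact fun t => (hderiv t).differentiableAt
  · rw [hd1]; exact fun t => (hderiv2 t).differentiableAt
  · intro x
    simp only [Function.iterate_succ, Function.iterate_zero, Function.comp_apply, id_eq]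
    rw [hd1, (hderiv2 x).deriv]
    positivity

theorem one_dim_feasibility {N K : ℕ} (hK : 2 ≤ K)
    (z : Fin N → Fin K → ℝ) (y : Fin N → Fin K) (k : Fin K)
    (hNk : 0 < (Finset.univ.filter (fun n : Fin N => y n = k)).card)
    (hNkN : (Finset.univ.filter (fun n : Fin N => y n = k)).card < N)
    (α : ℝ) (hα0 : 0 < α) (hα1 : α ≤ 1) :
    Filter.Tendsto (deltaEllK z y k) Filter.atTop Filter.atBot ∧
    Filter.Tendsto (deltaEllK z y k) Filter.atBot Filter.atBot ∧
    ∃ a b : ℝ, a ≤ 0 ∧ 0 ≤ b ∧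
      {t : ℝ | Real.log α ≤ deltaEllK z y k t} = Set.Icc a b := by
  classical
  open Real Filter Set in
  have hKpos : 0 < K := by omega
  haveI : Nonempty (Fin K) := ⟨⟨0, hKpos⟩⟩
  set Nk := (Finset.univ.filter (fun n : Fin N => y n = k)).card with hNkdef
  set Cn : Fin N → ℝ := fun n => ∑ l ∈ Finset.univ.erase k, Real.exp (z n l) with hCndef
  set Dn : Fin N → ℝ := fun n => Real.exp (z n k) with hDndef
  have hCpos : ∀ n, 0 < Cn n := by
    intro n
    apply Finset.sum_pos (fun l _ => Real.exp_pos _)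
    rw [← Finset.card_pos, Finset.card_erase_of_mem (Finset.mem_univ k), Finset.card_univ,
      Fintype.card_fin]
    omega
  have hDpos : ∀ n, 0 < Dn n := fun n => Real.exp_pos _
  have hupos : ∀ n (t : ℝ), 0 < Cn n + Dn n * Real.exp t := by
    intro n t
    have := hCpos n; have := hDpos n; positivity
  have hsum : ∀ n (t : ℝ), ∑ l, Real.exp (z n l + if l = k then t else 0)
      = Cn n + Dn n * Real.exp t := by
    intro n t
    rw [← Finset.sum_erase_add _ _ (Finset.mem_univ k)]
    congr 1
    · exact Finset.sum_congr rfl fun l hl => by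
        rw [if_neg (Finset.ne_of_mem_erase hl), add_zero]
    · rw [if_pos rfl, Real.exp_add]
  have hlogsm : ∀ (v : Fin K → ℝ) (j : Fin K),
      Real.log (softmax v j) = v j - Real.log (∑ l, Real.exp (v l)) := by
    intro v j
    have hs : 0 < ∑ l, Real.exp (v l) :=
      Finset.sum_pos (fun l _ => Real.exp_pos _) Finset.univ_nonempty
    rw [softmax, Real.log_div (Real.exp_ne_zero _) hs.ne', Real.log_exp]
  set E : ℝ := ∑ n, Real.log (∑ l, Real.exp (z n l)) with hEdef
  have hf : ∀ t : ℝ, deltaEllK z y k t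
      = (Nk : ℝ) * t + E - ∑ n, Real.log (Cn n + Dn n * Real.exp t) := by
    intro t
    rw [deltaEllK, deltaEll]
    have : ∀ n : Fin N,
        Real.log (softmax (fun l => z n l + if l = k then t else 0) (y n)) -
          Real.log (softmax (z n) (y n))
        = (if y n = k then t else 0) + Real.log (∑ l, Real.exp (z n l))
            - Real.log (Cn n + Dn n * Real.exp t) := by
      intro n
      rw [hlogsm, hlogsm, hsum]
      ring
    rw [Finset.sum_congr rfl fun n _ => this n]
    rw [Finset.sum_sub_distrib, Finset.sum_add_distrib]
    congr 1
    congr 1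
    rw [← Finset.sum_filter, Finset.sum_const, hNkdef]
    simp [mul_comm]
  have hub1 : ∀ t : ℝ, deltaEllK z y k t ≤ ((Nk : ℝ) - N) * t + (E - ∑ n, z n k) := by
    intro t
    rw [hf t]
    have hterm : ∀ n : Fin N, z n k + t ≤ Real.log (Cn n + Dn n * Real.exp t) := by
      intro n
      have h1 : Dn n * Real.exp t ≤ Cn n + Dn n * Real.exp t := by
        have := hCpos n; linarith
      have h2 := Real.log_le_log (by have := hDpos n; positivity) h1
      rwa [Real.log_mul (hDpos n).ne' (Real.exp_ne_zero t), hDndef, Real.log_exp,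
        Real.log_exp] at h2
    have hsumle : ∑ n, (z n k + t) ≤ ∑ n, Real.log (Cn n + Dn n * Real.exp t) :=
      Finset.sum_le_sum fun n _ => hterm n
    have heq : ∑ n, (z n k + t) = (∑ n, z n k) + N * t := by
      rw [Finset.sum_add_distrib, Finset.sum_const, Finset.card_univ, Fintype.card_fin,
        nsmul_eq_mul]
    nlinarith [hsumle]
  have hub2 : ∀ t : ℝ, deltaEllK z y k t ≤ (Nk : ℝ) * t + (E - ∑ n, Real.log (Cn n)) := by
    intro t
    rw [hf t]
    have hterm : ∀ n : Fin N, Real.log (Cn n) ≤ Real.log (Cn n + Dn n * Real.exp t) := by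
      intro n
      apply Real.log_le_log (hCpos n)
      have := hDpos n; nlinarith [Real.exp_pos t]
    have := Finset.sum_le_sum fun n (_ : n ∈ Finset.univ) => hterm n
    linarith
  have htop : Tendsto (deltaEllK z y k) atTop atBot := by
    apply tendsto_atBot_mono hub1
    apply tendsto_atBot_add_const_right
    apply Tendsto.const_mul_atTop_of_neg _ tendsto_id
    have : (Nk : ℝ) < N := by exact_mod_cast hNkN
    linarith
  have hbot : Tendsto (deltaEllK z y k) atBot atBot := by
    apply tendsto_atBot_mono hub2
    apply tendsto_atBot_add_const_right
    apply Tendsto.const_mul_atBot _ tendsto_id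
    exact_mod_cast hNk
  refine ⟨htop, hbot, ?_⟩
  have hcont : Continuous (deltaEllK z y k) := by
    have h1 : Continuous fun t : ℝ =>
        (Nk : ℝ) * t + E - ∑ n, Real.log (Cn n + Dn n * Real.exp t) := by
      apply Continuous.sub ((continuous_const.mul continuous_id).add continuous_const)
      apply continuous_finset_sum
      intro n _
      exact Continuous.log (continuous_const.add (continuous_const.mul Real.continuous_exp))
        fun t => (hupos n t).ne'
    exact (funext hf ▸ h1 : _)
  have hconc : ConcaveOn ℝ Set.univ (deltaEllK z y k) := by
    have hsumconv : ∀ s : Finset (Fin N),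
        ConvexOn ℝ Set.univ (fun t : ℝ => ∑ n ∈ s, Real.log (Cn n + Dn n * Real.exp t)) := by
      intro s
      induction s using Finset.cons_induction with
      | empty => simpa using convexOn_const 0 convex_univ
      | cons n s hns ih =>
        have h := (convex_logCD _ _ (hCpos n) (hDpos n)).add ih
        have heq : (fun t : ℝ => ∑ m ∈ Finset.cons n s hns, Real.log (Cn m + Dn m * Real.exp t))
            = fun t : ℝ => Real.log (Cn n + Dn n * Real.exp t) +
              ∑ m ∈ s, Real.log (Cn m + Dn m * Real.exp t) :=
          funext fun t => Finset.sum_cons hns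
        rw [heq]
        exact h
    have h1 : ConcaveOn ℝ Set.univ fun t : ℝ => (Nk : ℝ) * t + E := by
      refine ⟨convex_univ, fun x _ y' _ a b ha hb hab => ?_⟩
      simp only [smul_eq_mul]
      have : a * ((Nk : ℝ) * x + E) + b * ((Nk : ℝ) * y' + E)
          = (Nk : ℝ) * (a * x + b * y') + E := by linear_combination E * hab
      linarith
    have h2 := (hsumconv Finset.univ).neg
    have hsum2 := h1.add h2
    have heq : ((fun t : ℝ => (Nk : ℝ) * t + E) +
        (-fun t : ℝ => ∑ n, Real.log (Cn n + Dn n * Real.exp t))) = deltaEllK z y k := by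
      funext t
      simp only [Pi.add_apply, Pi.neg_apply]
      rw [hf t]
      ring
    rwa [heq] at hsum2
  have hzero : deltaEllK z y k 0 = 0 := by
    rw [hf 0]
    have : ∀ n : Fin N, Real.log (Cn n + Dn n * Real.exp 0) = Real.log (∑ l, Real.exp (z n l)) := by
      intro n
      rw [← hsum n 0]
      congr 1
      exact Finset.sum_congr rfl fun l _ => by simp
    rw [Finset.sum_congr rfl fun n _ => this n, hEdef]
    ring
  set S : Set ℝ := {t : ℝ | Real.log α ≤ deltaEllK z y k t} with hSdef
  have hmem0 : (0 : ℝ) ∈ S := by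
    simp only [hSdef, Set.mem_setOf_eq, hzero]
    exact Real.log_nonpos hα0.le hα1
  have hclosed : IsClosed S := isClosed_le continuous_const hcont
  have hconvex : Convex ℝ S := by
    have := hconc.convex_ge (Real.log α)
    simpa using this
  have hbdd : Bornology.IsBounded S := by
    obtain ⟨b, hb⟩ := (htop.eventually (eventually_lt_atBot (Real.log α))).exists_forall_of_atTop
    obtain ⟨a, ha⟩ := (hbot.eventually (eventually_lt_atBot (Real.log α))).exists_forall_of_atBot
    apply (Metric.isBounded_Icc a b).subset
    intro t ht
    simp only [hSdef, Set.mem_setOf_eq] at ht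
    constructor
    · by_contra h
      exact absurd ht (not_le.mpr (ha t (le_of_not_ge h)))
    · by_contra h
      exact absurd ht (not_le.mpr (hb t (le_of_not_ge h)))
  have hcompact : IsCompact S := Metric.isCompact_of_isClosed_isBounded hclosed hbdd
  have hconn : IsConnected S := ⟨⟨0, hmem0⟩, hconvex.isPreconnected⟩
  refine ⟨sInf S, sSup S, ?_, ?_, eq_Icc_of_connected_compact hconn hcompact⟩
  · exact csInf_le hcompact.bddBelow hmem0
  · exact le_csSup hcompact.bddAbove hmem0
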